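/- arXiv:1403.5422 — 17 statements merged into one kernel-verified Lean document; each statement's English description precedes it below -/
import Mathlib

section
/- Every Stein AG-groupoid is right alternative, i.e., for all a,b in S, (a·b)·b = a·(b·b). -/
/-- Every Stein AG-groupoid is right alternative. -/
theorem stein_right_alternative {S : Type*} (mul : S → S → S)
    (left_invertive : ∀ a b c : S, mul (mul a b) c = mul (mul c b) a)
    (stein : ∀ a b c : S, mul a (mul b c) = mul (mul b c) a) :
    ∀ a b : S, mul (mul a b) b = mul a (mul b b) := by
  intro a b
  rw [left_invertive, stein]
end

section
/- Every Stein AG-groupoid is an AG**-groupoid, i.e., for all a,b,c in S, a·(b·c) = b·(a·c). -/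
/-- Every Stein AG-groupoid is an AG**-groupoid. -/
theorem stein_is_AGstarstar {S : Type*} (mul : S → S → S)
    (left_invertive : ∀ a b c : S, mul (mul a b) c = mul (mul c b) a)
    (stein : ∀ a b c : S, mul a (mul b c) = mul (mul b c) a) :
    ∀ a b c : S, mul a (mul b c) = mul b (mul a c) := by
  intro a b c
  rw [stein a b c, left_invertive b c a, ← stein b a c]
end

section
/- Every Stein AG-groupoid is a Bol*-AG-groupoid, i.e., for all a,b,c,d in S, a·((b·c)·d) = ((a·b)·c)·d. -/
/-- Every Stein AG-groupoid is a Bol*-AG-groupoid. -/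
theorem stein_is_bolstar {S : Type*} (mul : S → S → S)
    (left_invertive : ∀ a b c : S, mul (mul a b) c = mul (mul c b) a)
    (stein : ∀ a b c : S, mul a (mul b c) = mul (mul b c) a) :
    ∀ a b c d : S, mul a (mul (mul b c) d) = mul (mul (mul a b) c) d := by
  intro a b c d
  calc mul a (mul (mul b c) d)
      = mul (mul (mul b c) d) a := stein _ _ _
    _ = mul (mul (mul d c) b) a := by rw [left_invertive b c d]
    _ = mul (mul a b) (mul d c) := (left_invertive _ _ _).symm
    _ = mul (mul d c) (mul a b) := stein _ _ _
    _ = mul (mul (mul a b) c) d := (left_invertive _ _ _).symm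
end

section
/- Every Stein AG-groupoid is paramedial, i.e., for all a,b,c,d in S, (a·b)·(c·d) = (d·b)·(c·a). -/
/-- Every Stein AG-groupoid is paramedial. -/
theorem stein_paramedial {S : Type*} (mul : S → S → S)
    (left_invertive : ∀ a b c : S, mul (mul a b) c = mul (mul c b) a)
    (stein : ∀ a b c : S, mul a (mul b c) = mul (mul b c) a) :
    ∀ a b c d : S, mul (mul a b) (mul c d) = mul (mul d b) (mul c a) := by
  intro a b c d
  calc mul (mul a b) (mul c d)
      = mul (mul c d) (mul a b) := stein _ c d
    _ = mul (mul (mul a b) d) c := left_invertive _ _ _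
    _ = mul (mul (mul d b) a) c := by rw [left_invertive a b d]
    _ = mul (mul c a) (mul d b) := left_invertive _ _ _
    _ = mul (mul d b) (mul c a) := stein _ d b
end

section
/- Every Stein AG-groupoid is a left nuclear square AG-groupoid, i.e., for all a,b,c in S, ((a·a)·b)·c = (a·a)·(b·c). -/
/-- Every Stein AG-groupoid is a left nuclear square AG-groupoid. -/
theorem stein_left_nuclear_square {S : Type*} (mul : S → S → S)
    (left_invertive : ∀ a b c : S, mul (mul a b) c = mul (mul c b) a)
    (stein : ∀ a b c : S, mul a (mul b c) = mul (mul b c) a) :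
    ∀ a b c : S, mul (mul (mul a a) b) c = mul (mul a a) (mul b c) := by
  intro a b c
  calc mul (mul (mul a a) b) c
      = mul (mul c b) (mul a a) := left_invertive _ _ _
    _ = mul (mul a a) (mul c b) := (stein _ _ _).symm
    _ = mul (mul (mul c b) a) a := left_invertive _ _ _
    _ = mul (mul (mul a b) c) a := by rw [left_invertive c b a]
    _ = mul (mul a c) (mul a b) := left_invertive _ _ _
    _ = mul (mul a b) (mul a c) := (stein _ _ _).symm
    _ = mul (mul (mul a c) b) a := (left_invertive _ _ _).symm
    _ = mul (mul (mul b c) a) a := by rw [left_invertive b c a]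
    _ = mul (mul a a) (mul b c) := (left_invertive _ _ _).symm
end

section
/- Every Stein AG-groupoid is a right nuclear square AG-groupoid, i.e., for all a,b,c in S, (a·b)·(c·c) = a·(b·(c·c)). -/
/-- Every Stein AG-groupoid is a right nuclear square AG-groupoid. -/
theorem stein_right_nuclear_square {S : Type*} (mul : S → S → S)
    (left_invertive : ∀ a b c : S, mul (mul a b) c = mul (mul c b) a)
    (stein : ∀ a b c : S, mul a (mul b c) = mul (mul b c) a) :
    ∀ a b c : S, mul (mul a b) (mul c c) = mul a (mul b (mul c c)) := by
  intro a b c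
  calc mul (mul a b) (mul c c) = mul (mul (mul c c) b) a := left_invertive a b (mul c c)
    _ = mul a (mul (mul c c) b) := (stein a (mul c c) b).symm
    _ = mul a (mul b (mul c c)) := by rw [← stein b c c]
end

section
/- Every Stein AG-groupoid is a middle nuclear square AG-groupoid, i.e., for all a,b,c in S, (a·(b·b))·c = a·((b·b)·c). -/
/-- Every Stein AG-groupoid is a middle nuclear square AG-groupoid. -/
theorem stein_middle_nuclear_square {S : Type*} (mul : S → S → S)
    (left_invertive : ∀ a b c : S, mul (mul a b) c = mul (mul c b) a)
    (stein : ∀ a b c : S, mul a (mul b c) = mul (mul b c) a) :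
    ∀ a b c : S, mul (mul a (mul b b)) c = mul a (mul (mul b b) c) := by
  intro a b c
  have key : ∀ x y : S, mul (mul x y) (mul b b) = mul (mul x (mul b b)) y := by
    intro x y
    rw [left_invertive x y (mul b b), ← stein y b b, left_invertive y (mul b b) x]
  rw [stein a (mul b b) c, left_invertive (mul b b) c a, key a c]
end

section
/- Every AG**-groupoid is a Bol*-AG-groupoid, i.e., if a set S with binary operation · satisfies the left invertive law and a·(b·c) = b·(a·c) for all a,b,c in S, then a·((b·c)·d) = ((a·b)·c)·d for all a,b,c,d in S. -/
/-- Every AG**-groupoid is a Bol*-AG-groupoid. -/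
theorem AGstarstar_is_bolstar {S : Type*} (mul : S → S → S)
    (left_invertive : ∀ a b c : S, mul (mul a b) c = mul (mul c b) a)
    (agss : ∀ a b c : S, mul a (mul b c) = mul b (mul a c)) :
    ∀ a b c d : S, mul a (mul (mul b c) d) = mul (mul (mul a b) c) d := by
  intro a b c d
  rw [left_invertive b c d, agss a (mul d c) b, left_invertive (mul a b) c d]
end

section
/- Every Bol*-AG-groupoid is paramedial, i.e., if a set S with binary operation · satisfies the left invertive law and a·((b·c)·d) = ((a·b)·c)·d for all a,b,c,d in S, then (a·b)·(c·d) = (d·b)·(c·a) for all a,b,c,d in S. -/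
/-- Every Bol*-AG-groupoid is paramedial. -/
theorem bolstar_paramedial {S : Type*} (mul : S → S → S)
    (left_invertive : ∀ a b c : S, mul (mul a b) c = mul (mul c b) a)
    (bolstar : ∀ a b c d : S, mul a (mul (mul b c) d) = mul (mul (mul a b) c) d) :
    ∀ a b c d : S, mul (mul a b) (mul c d) = mul (mul d b) (mul c a) := by
  intro a b c d
  have h1 : mul (mul a b) (mul c d) = mul b (mul (mul d c) a) := by
    rw [left_invertive a b (mul c d), left_invertive c d b, ← bolstar]
  have h2 : mul (mul d b) (mul c a) = mul b (mul (mul a c) d) := by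
    rw [left_invertive d b (mul c a), left_invertive c a b, ← bolstar]
  rw [h1, h2, left_invertive d c a]
end

section
/- Every AG**-groupoid is a left nuclear square AG-groupoid, i.e., if a set S with binary operation · satisfies the left invertive law and a·(b·c) = b·(a·c) for all a,b,c in S, then ((a·a)·b)·c = (a·a)·(b·c) for all a,b,c in S. -/
/-- Every AG**-groupoid is a left nuclear square AG-groupoid. -/
theorem AGstarstar_left_nuclear_square {S : Type*} (mul : S → S → S)
    (left_invertive : ∀ a b c : S, mul (mul a b) c = mul (mul c b) a)
    (agss : ∀ a b c : S, mul a (mul b c) = mul b (mul a c)) :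
    ∀ a b c : S, mul (mul (mul a a) b) c = mul (mul a a) (mul b c) := by
  have medial : ∀ x y z w : S, mul (mul x y) (mul z w) = mul (mul x z) (mul y w) := by
    intro x y z w
    calc mul (mul x y) (mul z w) = mul (mul (mul z w) y) x := left_invertive x y (mul z w)
      _ = mul (mul (mul y w) z) x := by rw [left_invertive z w y]
      _ = mul (mul x z) (mul y w) := left_invertive (mul y w) z x
  intro a b c
  calc mul (mul (mul a a) b) c = mul (mul c b) (mul a a) := left_invertive (mul a a) b c
    _ = mul a (mul (mul c b) a) := agss (mul c b) a a
    _ = mul a (mul (mul a b) c) := by rw [left_invertive c b a]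
    _ = mul (mul a b) (mul a c) := agss a (mul a b) c
    _ = mul (mul a a) (mul b c) := medial a b a c
end

section
/- If a Stein AG-groupoid S is also an AG*-groupoid, i.e., (a·b)·c = b·(a·c) for all a,b,c in S, then S is a semigroup: the operation · is associative. -/
/-- A Stein AG-groupoid that is also an AG*-groupoid is a semigroup. -/
theorem stein_AGstar_is_semigroup {S : Type*} (mul : S → S → S)
    (left_invertive : ∀ a b c : S, mul (mul a b) c = mul (mul c b) a)
    (stein : ∀ a b c : S, mul a (mul b c) = mul (mul b c) a)
    (agstar : ∀ a b c : S, mul (mul a b) c = mul b (mul a c)) :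
    ∀ a b c : S, mul (mul a b) c = mul a (mul b c) := by
  intro a b c
  rw [agstar, stein, left_invertive, ← stein]
end

section
/- If a Stein AG-groupoid S is an AG-3-band, i.e., a·(a·a) = a for all a in S, then S is a semigroup: the operation · is associative. -/
/-- A Stein AG-groupoid that is an AG-3-band is a semigroup. -/
theorem stein_AG3band_is_semigroup {S : Type*} (mul : S → S → S)
    (left_invertive : ∀ a b c : S, mul (mul a b) c = mul (mul c b) a)
    (stein : ∀ a b c : S, mul a (mul b c) = mul (mul b c) a)
    (band3 : ∀ a : S, mul a (mul a a) = a) :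
    ∀ a b c : S, mul (mul a b) c = mul a (mul b c) := by
  have comm : ∀ x y : S, mul x y = mul y x := by
    intro x y
    conv_lhs => rw [← band3 y]
    rw [stein, band3]
  intro a b c
  rw [left_invertive, comm (mul c b) a, comm c b]
end

section
/- If a Stein AG-groupoid S is a T_f^4-AG-groupoid, i.e., for all a,b,c,d in S, a·b = c·d implies a·d = c·b, then S is a semigroup: the operation · is associative. -/
/-- A Stein AG-groupoid that is a T_f^4-AG-groupoid is a semigroup. -/
theorem stein_Tf4_is_semigroup {S : Type*} (mul : S → S → S)
    (left_invertive : ∀ a b c : S, mul (mul a b) c = mul (mul c b) a)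
    (stein : ∀ a b c : S, mul a (mul b c) = mul (mul b c) a)
    (tf4 : ∀ a b c d : S, mul a b = mul c d → mul a d = mul c b) :
    ∀ a b c : S, mul (mul a b) c = mul a (mul b c) := by
  intro a b c
  -- all squares are equal
  have sq : ∀ x y z : S, mul x x = mul (mul y z) (mul y z) :=
    fun x y z => tf4 _ _ _ _ (stein x y z)
  set e := mul a a with he
  have sqc : ∀ x : S, mul x x = e := fun x => (sq x a a).trans (sq a a a).symm
  have ecomm : ∀ x : S, mul x e = mul e x := fun x => stein x a a
  -- (x*y)*x = e*y
  have aba : ∀ x y : S, mul (mul x y) x = mul e y := by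
    intro x y
    have h := tf4 (mul x y) y (mul y y) x (left_invertive x y y)
    rw [sqc y] at h
    exact h
  -- (y*x)*e = x*y
  have pe : ∀ x y : S, mul (mul y x) e = mul x y := by
    intro x y
    have h : mul (mul y x) y = mul x e := (aba y x).trans (ecomm x).symm
    exact tf4 (mul y x) y x e h
  -- key: (c*b)*(b*c) = e*e
  have key : mul (mul c b) (mul b c) = mul e e := by
    calc mul (mul c b) (mul b c) = mul (mul (mul b c) b) c := left_invertive c b (mul b c)
      _ = mul (mul e c) c := by rw [aba b c]
      _ = mul (mul c c) e := left_invertive e c c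
      _ = mul e e := by rw [sqc c]
  -- commutativity
  have comm : mul b c = mul c b := by
    have h := tf4 (mul c b) (mul b c) e e key
    rw [pe b c] at h
    rw [stein e b c, pe c b] at h
    exact h
  rw [left_invertive a b c, ← comm, stein a b c]
end

section
/- Let S be a Stein AG-groupoid and L a left ideal of S (i.e., SL ⊆ L). Then L² = LL is a two-sided ideal of S, i.e., S(L²) ⊆ L² and (L²)S ⊆ L². -/
/-- In a Stein AG-groupoid, if L is a left ideal then L² is a two-sided ideal. -/
theorem stein_left_ideal_square_is_ideal {S : Type*} (mul : S → S → S)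
    (left_invertive : ∀ a b c : S, mul (mul a b) c = mul (mul c b) a)
    (stein : ∀ a b c : S, mul a (mul b c) = mul (mul b c) a)
    (L : Set S) (hL : Set.image2 mul Set.univ L ⊆ L) :
    Set.image2 mul Set.univ (Set.image2 mul L L) ⊆ Set.image2 mul L L ∧
    Set.image2 mul (Set.image2 mul L L) Set.univ ⊆ Set.image2 mul L L := by
  have hmem : ∀ s a : S, a ∈ L → mul s a ∈ L := fun s a ha =>
    hL (Set.mem_image2_of_mem (Set.mem_univ s) ha)
  have hright : Set.image2 mul (Set.image2 mul L L) Set.univ ⊆ Set.image2 mul L L := by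
    rintro x ⟨p, ⟨l1, hl1, l2, hl2, rfl⟩, s, -, rfl⟩
    rw [left_invertive]
    exact Set.mem_image2_of_mem (hmem s l2 hl2) hl1
  refine ⟨?_, hright⟩
  rintro x ⟨s, -, p, ⟨l1, hl1, l2, hl2, rfl⟩, rfl⟩
  rw [stein]
  exact hright (Set.mem_image2_of_mem (Set.mem_image2_of_mem hl1 hl2) (Set.mem_univ s))
end

section
/- Let S be a Stein AG-groupoid and a a fixed element of S. Then the set aS = {a·x : x ∈ S} is a two-sided ideal of S, i.e., S(aS) ⊆ aS and (aS)S ⊆ aS. Moreover, for any fixed a in S, the set (aS)a = {(a·x)·a : x ∈ S} is also a two-sided ideal of S. -/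
/-- In a Stein AG-groupoid, for any fixed a, the sets aS and (aS)a are
two-sided ideals. -/
theorem stein_aS_and_aSa_ideals {S : Type*} (mul : S → S → S)
    (left_invertive : ∀ a b c : S, mul (mul a b) c = mul (mul c b) a)
    (stein : ∀ a b c : S, mul a (mul b c) = mul (mul b c) a)
    (a : S) :
    (Set.image2 mul Set.univ {z : S | ∃ x : S, z = mul a x} ⊆
      {z : S | ∃ x : S, z = mul a x} ∧
     Set.image2 mul {z : S | ∃ x : S, z = mul a x} Set.univ ⊆
      {z : S | ∃ x : S, z = mul a x}) ∧
    (Set.image2 mul Set.univ {z : S | ∃ x : S, z = mul (mul a x) a} ⊆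
      {z : S | ∃ x : S, z = mul (mul a x) a} ∧
     Set.image2 mul {z : S | ∃ x : S, z = mul (mul a x) a} Set.univ ⊆
      {z : S | ∃ x : S, z = mul (mul a x) a}) := by
  -- key fact: s·(a·x) = a·(s·x)
  have key : ∀ s x : S, mul s (mul a x) = mul a (mul s x) := by
    intro s x
    rw [stein s a x, left_invertive a x s, ← stein a s x]
  constructor
  · constructor
    · rintro z ⟨s, -, w, ⟨x, rfl⟩, rfl⟩
      exact ⟨mul s x, key s x⟩
    · rintro z ⟨w, ⟨x, rfl⟩, s, -, rfl⟩
      refine ⟨mul s x, ?_⟩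
      rw [left_invertive a x s, ← stein a s x]
    -- done
  · -- note (a·x)·a = a·(a·x) by stein
    have flip : ∀ x : S, mul (mul a x) a = mul a (mul a x) := fun x =>
      (stein a a x).symm
    constructor
    · rintro z ⟨s, -, w, ⟨x, rfl⟩, rfl⟩
      refine ⟨mul s x, ?_⟩
      rw [flip x, key s (mul a x), key s x, flip (mul s x)]
    · rintro z ⟨w, ⟨x, rfl⟩, s, -, rfl⟩
      refine ⟨mul s x, ?_⟩
      rw [flip x, left_invertive a (mul a x) s, key s x, flip (mul s x)]
end

section
/- Let S be a Stein AG-groupoid and a a fixed element of S. Then the set a(Sa) = {a·(x·a) : x ∈ S} is a two-sided ideal of S, and it is minimal among ideals containing a: if L is any two-sided ideal of S with a ∈ L, then a(Sa) ⊆ L. -/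
/-- In a Stein AG-groupoid, for any fixed a, the set a(Sa) is a two-sided
ideal, minimal among the ideals containing a. -/
theorem stein_aSa_minimal_ideal {S : Type*} (mul : S → S → S)
    (left_invertive : ∀ a b c : S, mul (mul a b) c = mul (mul c b) a)
    (stein : ∀ a b c : S, mul a (mul b c) = mul (mul b c) a)
    (a : S) :
    (Set.image2 mul Set.univ {z : S | ∃ x : S, z = mul a (mul x a)} ⊆
      {z : S | ∃ x : S, z = mul a (mul x a)} ∧
     Set.image2 mul {z : S | ∃ x : S, z = mul a (mul x a)} Set.univ ⊆
      {z : S | ∃ x : S, z = mul a (mul x a)}) ∧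
    (∀ L : Set S, Set.image2 mul Set.univ L ⊆ L →
      Set.image2 mul L Set.univ ⊆ L → a ∈ L →
      {z : S | ∃ x : S, z = mul a (mul x a)} ⊆ L) := by
  have medial : ∀ p q r t : S,
      mul (mul p q) (mul r t) = mul (mul p r) (mul q t) := by
    intro p q r t
    rw [left_invertive p q (mul r t), left_invertive r t q,
      left_invertive (mul q t) r p]
  have key : ∀ s x : S,
      mul (mul (mul x a) a) s = mul a (mul (mul s x) a) := by
    intro s x
    calc mul (mul (mul x a) a) s
        = mul (mul s a) (mul x a) := left_invertive (mul x a) a s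
      _ = mul (mul s x) (mul a a) := medial s a x a
      _ = mul (mul a a) (mul s x) := stein (mul s x) a a
      _ = mul (mul (mul s x) a) a := left_invertive a a (mul s x)
      _ = mul a (mul (mul s x) a) := (stein a (mul s x) a).symm
  refine ⟨⟨?_, ?_⟩, ?_⟩
  · rintro z ⟨s, -, w, ⟨x, rfl⟩, rfl⟩
    refine ⟨mul s x, ?_⟩
    rw [stein a x a, stein s (mul x a) a, key s x]
  · rintro z ⟨w, ⟨x, rfl⟩, s, -, rfl⟩
    refine ⟨mul s x, ?_⟩
    rw [stein a x a, key s x]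
  · rintro L hL hR haL z ⟨x, rfl⟩
    exact hL ⟨a, Set.mem_univ a, mul x a, hL ⟨x, Set.mem_univ x, a, haL, rfl⟩, rfl⟩
end

section
/- Let S be a Stein AG-groupoid, L a left ideal of S, R a right ideal of S, and let x, y be elements of S with x = x·x and y = y·y. Then (i) xL = L ∩ xS, (ii) Rx = Sx ∩ R, and (iii) x(Sy) = Sy ∩ xS, where xL = {x·l : l ∈ L}, xS = {x·s : s ∈ S}, Rx = {r·x : r ∈ R}, Sx = {s·x : s ∈ S}, Sy = {s·y : s ∈ S}, and x(Sy) = {x·(s·y) : s ∈ S}. -/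
/-- In a Stein AG-groupoid, for a left ideal L, a right ideal R, and
idempotent-like elements x = x·x, y = y·y:
(i) xL = L ∩ xS, (ii) Rx = Sx ∩ R, (iii) x(Sy) = Sy ∩ xS. -/
theorem stein_ideal_intersections {S : Type*} (mul : S → S → S)
    (left_invertive : ∀ a b c : S, mul (mul a b) c = mul (mul c b) a)
    (stein : ∀ a b c : S, mul a (mul b c) = mul (mul b c) a)
    (L R : Set S)
    (hL : Set.image2 mul Set.univ L ⊆ L)
    (hR : Set.image2 mul R Set.univ ⊆ R)
    (x y : S) (hx : x = mul x x) (hy : y = mul y y) :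
    {z : S | ∃ l ∈ L, z = mul x l} =
      L ∩ {z : S | ∃ s : S, z = mul x s} ∧
    {z : S | ∃ r ∈ R, z = mul r x} =
      {z : S | ∃ s : S, z = mul s x} ∩ R ∧
    {z : S | ∃ s : S, z = mul x (mul s y)} =
      {z : S | ∃ s : S, z = mul s y} ∩ {z : S | ∃ s : S, z = mul x s} := by
  -- commutation with the idempotent x
  have comx : ∀ s : S, mul s x = mul x s := by
    intro s
    calc mul s x = mul s (mul x x) := by rw [← hx]
      _ = mul (mul x x) s := stein s x x
      _ = mul x s := by rw [← hx]
  have comy : ∀ s : S, mul s y = mul y s := by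
    intro s
    calc mul s y = mul s (mul y y) := by rw [← hy]
      _ = mul (mul y y) s := stein s y y
      _ = mul y s := by rw [← hy]
  have xkey : ∀ s : S, mul x (mul x s) = mul x s := by
    intro s
    calc mul x (mul x s) = mul (mul x s) x := stein x x s
      _ = mul (mul s x) x := by rw [comx s]
      _ = mul (mul x x) s := left_invertive s x x
      _ = mul x s := by rw [← hx]
  have xkey2 : ∀ s : S, mul (mul s x) x = mul s x := by
    intro s
    calc mul (mul s x) x = mul (mul x x) s := left_invertive s x x
      _ = mul x s := by rw [← hx]
      _ = mul s x := (comx s).symm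
  have key3 : ∀ s : S, mul x (mul s y) = mul (mul s x) y := by
    intro s
    calc mul x (mul s y) = mul (mul s y) x := stein x s y
      _ = mul (mul x y) s := left_invertive s y x
      _ = mul (mul y x) s := by rw [comy x]
      _ = mul (mul s x) y := left_invertive y x s
  refine ⟨?_, ?_, ?_⟩
  · ext z
    constructor
    · rintro ⟨l, hl, rfl⟩
      exact ⟨hL (Set.mem_image2_of_mem (Set.mem_univ x) hl), ⟨l, rfl⟩⟩
    · rintro ⟨hzL, s, rfl⟩
      exact ⟨mul x s, hzL, (xkey s).symm⟩
  · ext z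
    constructor
    · rintro ⟨r, hr, rfl⟩
      exact ⟨⟨r, rfl⟩, hR (Set.mem_image2_of_mem hr (Set.mem_univ x))⟩
    · rintro ⟨⟨s, rfl⟩, hzR⟩
      exact ⟨mul s x, hzR, (xkey2 s).symm⟩
  · ext z
    constructor
    · rintro ⟨s, rfl⟩
      exact ⟨⟨mul s x, key3 s⟩, ⟨mul s y, rfl⟩⟩
    · rintro ⟨⟨s, hs⟩, t, rfl⟩
      exact ⟨s, by rw [← hs, xkey]⟩
end
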